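/- With V, g, P, π, ω, Ric, Ric⁵ and r, r⁵ as in the pointwise model, the manifold is of Einstein type of the fifth kind if and only if it is quasi-Einstein with Ricci tensor Ric = (1/(2n))·(2r − (n−1)·π(P))·g + ((n−1)/2)·(π⊗π); that is, Ric⁵ = (r⁵/n)·g holds if and only if Ric = (1/(2n))·(2r − (n−1)·π(P))·g + ((n−1)/2)·(π⊗π). -/

import Mathlib

/-- The `g`-trace of a bilinear form `B`: the trace of the endomorphism
`(g♭)⁻¹ ∘ B♭` of `V`, where `B♭ : V → V*` is `X ↦ B(X,·)`. -/
noncomputable def trG {V : Type*} [AddCommGroup V] [Module ℝ V] [FiniteDimensional ℝ V]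
    (g : LinearMap.BilinForm ℝ V) (hg : g.Nondegenerate)
    (B : LinearMap.BilinForm ℝ V) : ℝ :=
  LinearMap.trace ℝ V ((g.toDual hg).symm.toLinearMap ∘ₗ B)

section aux
variable {V : Type*} [AddCommGroup V] [Module ℝ V] [FiniteDimensional ℝ V]
    (g : LinearMap.BilinForm ℝ V) (hg : g.Nondegenerate)

lemma trG_add (B C : LinearMap.BilinForm ℝ V) :
    trG g hg (B + C) = trG g hg B + trG g hg C := by
  simp [trG, LinearMap.comp_add]

lemma trG_sub (B C : LinearMap.BilinForm ℝ V) :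
    trG g hg (B - C) = trG g hg B - trG g hg C := by
  simp [trG, LinearMap.comp_sub]

lemma trG_smul (c : ℝ) (B : LinearMap.BilinForm ℝ V) :
    trG g hg (c • B) = c * trG g hg B := by
  simp [trG, LinearMap.comp_smul]

lemma trG_self : trG g hg g = Module.finrank ℝ V := by
  have : (g.toDual hg).symm.toLinearMap ∘ₗ (g : V →ₗ[ℝ] Module.Dual ℝ V) = LinearMap.id := by
    ext v
    exact (g.toDual hg).symm_apply_apply v
  rw [trG, this, LinearMap.trace_id]

lemma trG_pipi (hgs : g.IsSymm) (P : V) (π : V →ₗ[ℝ] ℝ) (hπ : π = g.flip P) :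
    trG g hg (π.smulRight π) = π P := by
  have hP : (g.toDual hg).symm π = P := by
    apply (g.toDual hg).injective
    rw [LinearEquiv.apply_symm_apply]
    ext v
    rw [hπ]
    exact (hgs.eq P v).symm
  have hcomp : (g.toDual hg).symm.toLinearMap ∘ₗ (π.smulRight π)
      = (LinearMap.toSpanSingleton ℝ V P) ∘ₗ π := by
    ext v
    simp [hP]
  rw [trG, hcomp, LinearMap.trace_comp_comm']
  have : π ∘ₗ LinearMap.toSpanSingleton ℝ V P = π P • LinearMap.id := by
    ext; simp [mul_comm]
  rw [this]
  simp

end aux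

theorem stmt_6 {V : Type*} [AddCommGroup V] [Module ℝ V] [FiniteDimensional ℝ V]
    (n : ℕ) (hn : 3 ≤ n) (hdim : Module.finrank ℝ V = n)
    (g : LinearMap.BilinForm ℝ V) (hg : g.Nondegenerate) (hgs : g.IsSymm)
    (P : V) (π : V →ₗ[ℝ] ℝ) (hπ : π = g.flip P) (ω : ℝ)
    (ππ : LinearMap.BilinForm ℝ V) (hππ : ππ = π.smulRight π)
    (Ric : LinearMap.BilinForm ℝ V) (hRicSymm : Ric.IsSymm)
    (Ric5 : LinearMap.BilinForm ℝ V)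
    (hRic5 : Ric5 = Ric - ((((n : ℝ) - 1) / 2) * (3 * ω + π P)) • g - (((n : ℝ) - 1) / 2) • ππ) :
    Ric5 = (trG g hg Ric5 / (n : ℝ)) • g ↔
      Ric = ((1 / (2 * (n : ℝ))) * (2 * trG g hg Ric - ((n : ℝ) - 1) * π P)) • g
        + (((n : ℝ) - 1) / 2) • ππ := by
  have hn0 : (n : ℝ) ≠ 0 := by positivity
  set c : ℝ := (((n : ℝ) - 1) / 2) * (3 * ω + π P) with hc
  set d : ℝ := ((n : ℝ) - 1) / 2 with hd
  have htr5 : trG g hg Ric5 = trG g hg Ric - c * n - d * π P := by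
    rw [hRic5, trG_sub, trG_sub, trG_smul, trG_smul, trG_self g hg, hdim,
      hππ, trG_pipi g hg hgs P π hπ]
  constructor
  · intro h
    have hR : Ric = (trG g hg Ric5 / n + c) • g + d • ππ := by
      rw [add_smul, ← h, hRic5]; abel
    have hscal : trG g hg Ric5 / n + c
        = (1 / (2 * (n : ℝ))) * (2 * trG g hg Ric - ((n : ℝ) - 1) * π P) := by
      rw [htr5, hd]
      field_simp
      ring
    rw [hscal] at hR
    exact hR
  · intro h
    set s : ℝ := (1 / (2 * (n : ℝ))) * (2 * trG g hg Ric - ((n : ℝ) - 1) * π P) with hs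
    have h5 : Ric5 = (s - c) • g := by
      rw [hRic5, h]; module
    have htr : trG g hg Ric5 = (s - c) * n := by
      rw [h5, trG_smul, trG_self g hg, hdim]
    rw [htr, h5]
    congr 1
    field_simp
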